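/- Suppose the past assortments are the revenue-ordered assortments and the uncertainty set U_0 is nonempty. Then sup_{S ∈ 𝒮} inf_{λ ∈ U_0} R^λ(S) = max_{m ∈ {1,…,n}} Σ_{i ∈ S_m} r(i)·v_{m,i}. -/
import Mathlib


namespace RobustAssortment

/-- `i` is the most preferred product of the assortment `S` under the ranking `σ`. -/
def isTop {n : ℕ} (σ : Equiv.Perm (Fin (n + 1))) (S : Finset (Fin (n + 1)))
    (i : Fin (n + 1)) : Prop :=
  i ∈ S ∧ ∀ j ∈ S, σ i ≤ σ j

instance {n : ℕ} (σ : Equiv.Perm (Fin (n + 1))) (S : Finset (Fin (n + 1)))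
    (i : Fin (n + 1)) : Decidable (isTop σ S i) := by
  unfold isTop; infer_instance
/-- A ranking-based choice model: nonnegative weights on rankings summing to one. -/
def IsChoiceModel {n : ℕ} (lam : Equiv.Perm (Fin (n + 1)) → ℝ) : Prop :=
  (∀ σ, 0 ≤ lam σ) ∧ ∑ σ : Equiv.Perm (Fin (n + 1)), lam σ = 1

/-- Choice probability `D^λ_i(S)`. -/
noncomputable def choiceProb {n : ℕ} (lam : Equiv.Perm (Fin (n + 1)) → ℝ)
    (S : Finset (Fin (n + 1))) (i : Fin (n + 1)) : ℝ :=
  ∑ σ : Equiv.Perm (Fin (n + 1)), if isTop σ S i then lam σ else 0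

/-- Expected revenue `R^λ(S)`. -/
noncomputable def expRev {n : ℕ} (r : Fin (n + 1) → ℝ)
    (lam : Equiv.Perm (Fin (n + 1)) → ℝ) (S : Finset (Fin (n + 1))) : ℝ :=
  ∑ i ∈ S, r i * choiceProb lam S i

/-- The uncertainty set `U_η` of choice models consistent with the sales data. -/
def Uset {n M : ℕ} (Sm : Fin M → Finset (Fin (n + 1)))
    (v : Fin M → Fin (n + 1) → ℝ) (η : ℝ) :
    Set (Equiv.Perm (Fin (n + 1)) → ℝ) :=
  {lam | IsChoiceModel lam ∧
    ∀ m : Fin M, ∀ i ∈ Sm m, |choiceProb lam (Sm m) i - v m i| ≤ η}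

/-- Worst-case expected revenue `inf_{λ ∈ U_η} R^λ(S)`. -/
noncomputable def wcRev {n M : ℕ} (Sm : Fin M → Finset (Fin (n + 1)))
    (v : Fin M → Fin (n + 1) → ℝ) (η : ℝ) (r : Fin (n + 1) → ℝ)
    (S : Finset (Fin (n + 1))) : ℝ :=
  sInf {x | ∃ lam ∈ Uset Sm v η, x = expRev r lam S}

/-! ### Auxiliary development -/

variable {n : ℕ}

/-- The σ-top of a nonempty assortment (junk value `0` if empty). -/
noncomputable def topE (σ : Equiv.Perm (Fin (n+1))) (S : Finset (Fin (n+1))) : Fin (n+1) :=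
  if h : S.Nonempty then σ.symm ((S.image σ).min' (h.image σ)) else 0

lemma isTop_topE (σ : Equiv.Perm (Fin (n+1))) {S : Finset (Fin (n+1))} (h : S.Nonempty) :
    isTop σ S (topE σ S) := by
  rw [topE, dif_pos h]
  obtain ⟨x, hx, hxe⟩ := Finset.mem_image.mp ((S.image σ).min'_mem (h.image σ))
  constructor
  · rw [← hxe]; simpa using hx
  · intro j hj
    rw [Equiv.apply_symm_apply]
    exact Finset.min'_le _ _ (Finset.mem_image_of_mem σ hj)

lemma isTop_iff {σ : Equiv.Perm (Fin (n+1))} {S : Finset (Fin (n+1))} (h : S.Nonempty)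
    {i : Fin (n+1)} : isTop σ S i ↔ i = topE σ S := by
  constructor
  · rintro ⟨hi, hmin⟩
    have ht := isTop_topE σ h
    exact σ.injective (le_antisymm (hmin _ ht.1) (ht.2 _ hi))
  · rintro rfl; exact isTop_topE σ h

lemma isTop_congr {σ τ : Equiv.Perm (Fin (n+1))} {S : Finset (Fin (n+1))} (h : S.Nonempty)
    (H : ∀ i, isTop σ S i → isTop τ S i) (i : Fin (n+1)) : isTop σ S i ↔ isTop τ S i := by
  constructor
  · exact H i
  · intro hi
    have h2 := H _ (isTop_topE σ h)
    rw [isTop_iff h] at hi h2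
    rw [isTop_iff h, hi, ← h2]

/-- `i` is a "record" of `σ`: preferred to `0` and to every product with larger index. -/
def IsRec (σ : Equiv.Perm (Fin (n+1))) (i : Fin (n+1)) : Prop :=
  i ≠ 0 ∧ σ i < σ 0 ∧ ∀ j, i ≤ j → σ i ≤ σ j

instance (σ : Equiv.Perm (Fin (n+1))) (i : Fin (n+1)) : Decidable (IsRec σ i) := by
  unfold IsRec; infer_instance

def recsAbove (σ : Equiv.Perm (Fin (n+1))) (a : ℕ) : Finset (Fin (n+1)) :=
  Finset.univ.filter (fun i => IsRec σ i ∧ a < (i : ℕ))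

lemma mem_recsAbove {σ : Equiv.Perm (Fin (n+1))} {a : ℕ} {i : Fin (n+1)} :
    i ∈ recsAbove σ a ↔ IsRec σ i ∧ a < (i : ℕ) := by simp [recsAbove]

/-- The revenue-ordered assortment `{0} ∪ {i : i > a}`. -/
def Sa (n : ℕ) (a : ℕ) : Finset (Fin (n+1)) :=
  Finset.univ.filter (fun i : Fin (n+1) => i = 0 ∨ a < (i : ℕ))

lemma mem_Sa {a : ℕ} {i : Fin (n+1)} : i ∈ Sa n a ↔ (i = 0 ∨ a < (i : ℕ)) := by simp [Sa]

lemma zero_mem_Sa (a : ℕ) : (0 : Fin (n+1)) ∈ Sa n a := mem_Sa.mpr (Or.inl rfl)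

lemma isTop_Sa_rec {σ : Equiv.Perm (Fin (n+1))} {a : ℕ} {i : Fin (n+1)}
    (hi : isTop σ (Sa n a) i) (hi0 : i ≠ 0) :
    i ∈ recsAbove σ a ∧ ∀ j ∈ recsAbove σ a, i ≤ j := by
  obtain ⟨hiS, hmin⟩ := hi
  have hia : a < (i : ℕ) := (mem_Sa.mp hiS).resolve_left hi0
  have hrec : IsRec σ i := by
    refine ⟨hi0, ?_, ?_⟩
    · exact lt_of_le_of_ne (hmin 0 (zero_mem_Sa a)) (fun he => hi0 (σ.injective he))
    · intro j hj
      exact hmin j (mem_Sa.mpr (Or.inr (lt_of_lt_of_le hia hj)))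
  refine ⟨mem_recsAbove.mpr ⟨hrec, hia⟩, ?_⟩
  intro j hj
  obtain ⟨hjrec, hja⟩ := mem_recsAbove.mp hj
  by_contra hij
  push_neg at hij
  have h1 := hmin j (mem_Sa.mpr (Or.inr hja))
  have h2 := hjrec.2.2 i hij.le
  exact hij.ne (σ.injective (le_antisymm h2 h1))

lemma isTop_Sa_zero {σ : Equiv.Perm (Fin (n+1))} {a : ℕ}
    (hi : isTop σ (Sa n a) 0) : recsAbove σ a = ∅ := by
  by_contra h
  obtain ⟨j, hj⟩ := Finset.nonempty_of_ne_empty h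
  obtain ⟨hjrec, hja⟩ := mem_recsAbove.mp hj
  exact absurd (hi.2 j (mem_Sa.mpr (Or.inr hja))) (not_le.mpr hjrec.2.1)

/-- minimal record above `a` (junk `0` if none). -/
noncomputable def minRec (σ : Equiv.Perm (Fin (n+1))) (a : ℕ) : Fin (n+1) :=
  if h : (recsAbove σ a).Nonempty then (recsAbove σ a).min' h else 0

lemma minRec_mem {σ : Equiv.Perm (Fin (n+1))} {a : ℕ} (h : (recsAbove σ a).Nonempty) :
    minRec σ a ∈ recsAbove σ a := by
  rw [minRec, dif_pos h]; exact Finset.min'_mem _ h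

lemma minRec_le {σ : Equiv.Perm (Fin (n+1))} {a : ℕ} (h : (recsAbove σ a).Nonempty) :
    ∀ i ∈ recsAbove σ a, minRec σ a ≤ i := by
  rw [minRec, dif_pos h]; exact fun i => Finset.min'_le _ i

/-- The key function defining the canonical ranking associated with `σ` and a product `s`. -/
noncomputable def keyF (σ : Equiv.Perm (Fin (n+1))) (s : Fin (n+1)) (j : Fin (n+1)) : ℕ :=
  if IsRec σ j then 3 * (j : ℕ)
  else if j = s ∧ (recsAbove σ ((s : ℕ) - 1)).Nonempty then
    3 * ((minRec σ ((s : ℕ) - 1) : Fin (n+1)) : ℕ) + 1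
  else if j = 0 then 3 * (n + 1)
  else 3 * (n + 1) + 1 + (j : ℕ)

lemma keyF_injective (σ : Equiv.Perm (Fin (n+1))) (s : Fin (n+1)) :
    Function.Injective (keyF σ s) := by
  have hm : ((minRec σ ((s : ℕ) - 1) : Fin (n+1)) : ℕ) ≤ n := Fin.is_le _
  intro a b hab
  have ha : (a : ℕ) ≤ n := Fin.is_le a
  have hb : (b : ℕ) ≤ n := Fin.is_le b
  unfold keyF at hab
  split_ifs at hab <;> exact Fin.val_injective (by omega)

lemma keyF_rec {σ : Equiv.Perm (Fin (n+1))} {s j : Fin (n+1)} (h : IsRec σ j) :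
    keyF σ s j = 3 * (j : ℕ) := by unfold keyF; rw [if_pos h]

lemma keyF_zero {σ : Equiv.Perm (Fin (n+1))} {s : Fin (n+1)} (hs : s ≠ 0) :
    keyF σ s 0 = 3 * (n + 1) := by
  unfold keyF
  rw [if_neg (fun h => h.1 rfl), if_neg (fun h => hs h.1.symm), if_pos rfl]

/-- The canonical ranking associated with `σ` and `s`. -/
noncomputable def cperm (σ : Equiv.Perm (Fin (n+1))) (s : Fin (n+1)) : Equiv.Perm (Fin (n+1)) :=
  (Tuple.sort (keyF σ s))⁻¹

lemma cperm_le_iff (σ : Equiv.Perm (Fin (n+1))) (s : Fin (n+1)) (i j : Fin (n+1)) :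
    cperm σ s i ≤ cperm σ s j ↔ keyF σ s i ≤ keyF σ s j := by
  have hsm : StrictMono (keyF σ s ∘ Tuple.sort (keyF σ s)) :=
    (Tuple.monotone_sort _).strictMono_of_injective
      ((keyF_injective σ s).comp (Equiv.injective _))
  have h1 : ∀ x, (keyF σ s ∘ Tuple.sort (keyF σ s)) (cperm σ s x) = keyF σ s x := by
    intro x; simp [cperm]
  conv_rhs => rw [← h1 i, ← h1 j]
  exact hsm.le_iff_le.symm

lemma isTop_cperm_iff {σ : Equiv.Perm (Fin (n+1))} {s : Fin (n+1)}
    {T : Finset (Fin (n+1))} {i : Fin (n+1)} :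
    isTop (cperm σ s) T i ↔ i ∈ T ∧ ∀ j ∈ T, keyF σ s i ≤ keyF σ s j := by
  unfold isTop
  exact and_congr_right fun _ => forall₂_congr fun j _ => cperm_le_iff σ s i j

/-- The canonical ranking has the same top as `σ` on every revenue-ordered assortment. -/
lemma isTop_cperm_Sa {σ : Equiv.Perm (Fin (n+1))} {s : Fin (n+1)} (hs : s ≠ 0) {a : ℕ}
    {i : Fin (n+1)} (hi : isTop σ (Sa n a) i) : isTop (cperm σ s) (Sa n a) i := by
  rw [isTop_cperm_iff]
  refine ⟨hi.1, fun j hj => ?_⟩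
  by_cases hi0 : i = 0
  · subst hi0
    have hrecs := isTop_Sa_zero hi
    rw [keyF_zero hs]
    by_cases hj0 : j = 0
    · subst hj0; rw [keyF_zero hs]
    · have hja : a < (j : ℕ) := (mem_Sa.mp hj).resolve_left hj0
      have hjrec : ¬ IsRec σ j := fun h =>
        Finset.notMem_empty j (hrecs ▸ mem_recsAbove.mpr ⟨h, hja⟩)
      have hk : keyF σ s j = 3 * (n + 1) + 1 + (j : ℕ) := by
        unfold keyF
        rw [if_neg hjrec, if_neg, if_neg hj0]
        rintro ⟨rfl, hne⟩
        obtain ⟨x, hx⟩ := hne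
        obtain ⟨hxrec, hxa⟩ := mem_recsAbove.mp hx
        have hxa' : a < (x : ℕ) := by omega
        exact Finset.notMem_empty x (hrecs ▸ mem_recsAbove.mpr ⟨hxrec, hxa'⟩)
      rw [hk]; omega
  · obtain ⟨hiRec, hiMin⟩ := isTop_Sa_rec hi hi0
    have hirec : IsRec σ i := (mem_recsAbove.mp hiRec).1
    rw [keyF_rec hirec]
    have hin : (i : ℕ) ≤ n := Fin.is_le i
    by_cases hj0 : j = 0
    · subst hj0; rw [keyF_zero hs]; omega
    · have hja : a < (j : ℕ) := (mem_Sa.mp hj).resolve_left hj0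
      unfold keyF
      split_ifs with h1 h2
      · have hij := hiMin j (mem_recsAbove.mpr ⟨h1, hja⟩)
        have := Fin.le_def.mp hij
        omega
      · obtain ⟨rfl, hne⟩ := h2
        have hmm := mem_recsAbove.mp (minRec_mem hne)
        have h1 : a < ((minRec σ ((j:ℕ)-1) : Fin (n+1)) : ℕ) := by
          have := hmm.2; omega
        have hij := hiMin _ (mem_recsAbove.mpr ⟨hmm.1, h1⟩)
        have := Fin.le_def.mp hij
        omega
      · omega

/-- On any assortment `S ∋ 0` whose minimal nonzero element is `s`, the top of the
canonical ranking is dominated by the `σ`-top of the revenue-ordered assortment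
`Sa ((s:ℕ)-1)`. -/
lemma topE_cperm_le {σ : Equiv.Perm (Fin (n+1))} {s : Fin (n+1)} (hs : s ≠ 0)
    {S : Finset (Fin (n+1))} (h0 : (0 : Fin (n+1)) ∈ S) (hsS : s ∈ S)
    (hmin : ∀ j ∈ S, j ≠ 0 → s ≤ j) :
    topE (cperm σ s) S ≤ topE σ (Sa n ((s : ℕ) - 1)) := by
  set a : ℕ := (s : ℕ) - 1 with ha
  have hS : S.Nonempty := ⟨0, h0⟩
  have hSa : (Sa n a).Nonempty := ⟨0, zero_mem_Sa a⟩
  have hs1 : 1 ≤ (s : ℕ) := by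
    rcases Nat.eq_zero_or_pos (s : ℕ) with h | h
    · exact absurd (Fin.val_injective h) hs
    · exact h
  have ht := isTop_topE (cperm σ s) hS
  rw [isTop_cperm_iff] at ht
  set t := topE (cperm σ s) S with htdef
  set c₀ := topE σ (Sa n a) with hc₀
  by_cases hne : (recsAbove σ a).Nonempty
  · have hc0ne : c₀ ≠ 0 := by
      intro h
      have h' := isTop_topE σ hSa
      rw [← hc₀, h] at h'
      rw [isTop_Sa_zero h'] at hne
      exact Finset.not_nonempty_empty hne
    obtain ⟨hc0mem, hc0min⟩ := isTop_Sa_rec (isTop_topE σ hSa) hc0ne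
    have hceq : c₀ = minRec σ a :=
      le_antisymm (hc0min _ (minRec_mem hne)) (minRec_le hne _ hc0mem)
    have hcn : ((minRec σ a : Fin (n+1)) : ℕ) ≤ n := Fin.is_le _
    have hsc : (s : ℕ) ≤ ((minRec σ a : Fin (n+1)) : ℕ) := by
      have := (mem_recsAbove.mp (minRec_mem hne)).2; omega
    have hks : keyF σ s s ≤ 3 * ((minRec σ a : Fin (n+1)) : ℕ) + 1 := by
      by_cases hrec : IsRec σ s
      · rw [keyF_rec hrec]
        have h1 : minRec σ a ≤ s := minRec_le hne s (mem_recsAbove.mpr ⟨hrec, by omega⟩)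
        have := Fin.le_def.mp h1
        omega
      · unfold keyF
        rw [if_neg hrec, if_pos ⟨rfl, hne⟩]
    have hts := ht.2 s hsS
    rw [Fin.le_def, hceq]
    by_cases ht0 : t = 0
    · rw [ht0]; simp
    · have h2 : keyF σ s t ≤ 3 * ((minRec σ a : Fin (n+1)) : ℕ) + 1 := le_trans hts hks
      by_cases htrec : IsRec σ t
      · rw [keyF_rec htrec] at h2; omega
      · by_cases htb2 : t = s ∧ (recsAbove σ ((s : ℕ) - 1)).Nonempty
        · rw [htb2.1]; omega
        · have hkt : keyF σ s t = 3 * (n + 1) + 1 + (t : ℕ) := by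
            unfold keyF; rw [if_neg htrec, if_neg htb2, if_neg ht0]
          rw [hkt] at h2; omega
  · have ht0 : t = 0 := by
      by_contra ht0
      have hst := hmin t ht.1 ht0
      have hta : a < (t : ℕ) := by have := Fin.le_def.mp hst; omega
      have htrec : ¬ IsRec σ t := fun h => hne ⟨t, mem_recsAbove.mpr ⟨h, hta⟩⟩
      have hkt : keyF σ s t = 3 * (n + 1) + 1 + (t : ℕ) := by
        unfold keyF
        rw [if_neg htrec, if_neg, if_neg ht0]
        rintro ⟨-, hne'⟩; exact hne hne'
      have h2 := ht.2 0 h0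
      rw [hkt, keyF_zero hs] at h2
      omega
    rw [ht0]
    exact Fin.zero_le _

/-! ### Summation machinery -/

lemma choiceProb_nonneg {lam : Equiv.Perm (Fin (n+1)) → ℝ} (hlam : ∀ σ, 0 ≤ lam σ)
    (S : Finset (Fin (n+1))) (i : Fin (n+1)) : 0 ≤ choiceProb lam S i :=
  Finset.sum_nonneg fun σ _ => by
    by_cases h : isTop σ S i
    · rw [if_pos h]; exact hlam σ
    · rw [if_neg h]

lemma expRev_nonneg {r : Fin (n+1) → ℝ} (hr0 : r 0 = 0) (hr : StrictMono r)
    {lam : Equiv.Perm (Fin (n+1)) → ℝ} (hlam : ∀ σ, 0 ≤ lam σ)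
    (S : Finset (Fin (n+1))) : 0 ≤ expRev r lam S :=
  Finset.sum_nonneg fun i _ =>
    mul_nonneg (hr0 ▸ hr.monotone (Fin.zero_le i)) (choiceProb_nonneg hlam S i)

lemma expRev_eq_sum_perm (r : Fin (n+1) → ℝ) (lam : Equiv.Perm (Fin (n+1)) → ℝ)
    {S : Finset (Fin (n+1))} (h : S.Nonempty) :
    expRev r lam S = ∑ σ : Equiv.Perm (Fin (n+1)), lam σ * r (topE σ S) := by
  rw [expRev]
  simp only [choiceProb, Finset.mul_sum]
  rw [Finset.sum_comm]
  refine Finset.sum_congr rfl fun σ _ => ?_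
  calc ∑ i ∈ S, r i * (if isTop σ S i then lam σ else 0)
      = ∑ i ∈ S, (if i = topE σ S then r i * lam σ else 0) := by
        refine Finset.sum_congr rfl fun i _ => ?_
        rw [mul_ite, mul_zero, if_congr (isTop_iff h) rfl rfl]
    _ = r (topE σ S) * lam σ := by
        rw [Finset.sum_ite_eq' S (topE σ S) (fun i => r i * lam σ),
          if_pos (isTop_topE σ h).1]
    _ = lam σ * r (topE σ S) := mul_comm _ _

lemma sum_fiber_mul (G : Equiv.Perm (Fin (n+1)) → Equiv.Perm (Fin (n+1)))
    (lam : Equiv.Perm (Fin (n+1)) → ℝ) (c : Equiv.Perm (Fin (n+1)) → ℝ) :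
    ∑ τ : Equiv.Perm (Fin (n+1)),
        (∑ σ ∈ Finset.univ.filter (fun σ => G σ = τ), lam σ) * c τ
      = ∑ σ : Equiv.Perm (Fin (n+1)), lam σ * c (G σ) := by
  rw [← Finset.sum_fiberwise_of_maps_to (fun σ _ => Finset.mem_univ (G σ))
    (fun σ => lam σ * c (G σ))]
  refine Finset.sum_congr rfl fun τ _ => ?_
  rw [Finset.sum_mul]
  refine Finset.sum_congr rfl fun σ hσ => ?_
  rw [(Finset.mem_filter.mp hσ).2]

lemma sum_fiber (G : Equiv.Perm (Fin (n+1)) → Equiv.Perm (Fin (n+1)))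
    (lam : Equiv.Perm (Fin (n+1)) → ℝ) :
    ∑ τ : Equiv.Perm (Fin (n+1)), (∑ σ ∈ Finset.univ.filter (fun σ => G σ = τ), lam σ)
      = ∑ σ : Equiv.Perm (Fin (n+1)), lam σ :=
  Finset.sum_fiberwise_of_maps_to (fun σ _ => Finset.mem_univ (G σ)) lam

lemma choiceProb_pushforward (G : Equiv.Perm (Fin (n+1)) → Equiv.Perm (Fin (n+1)))
    (lam : Equiv.Perm (Fin (n+1)) → ℝ) (T : Finset (Fin (n+1))) (i : Fin (n+1)) :
    choiceProb (fun τ => ∑ σ ∈ Finset.univ.filter (fun σ => G σ = τ), lam σ) T i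
      = ∑ σ : Equiv.Perm (Fin (n+1)), if isTop (G σ) T i then lam σ else 0 := by
  unfold choiceProb
  calc ∑ τ : Equiv.Perm (Fin (n+1)),
        (if isTop τ T i then ∑ σ ∈ Finset.univ.filter (fun σ => G σ = τ), lam σ else 0)
      = ∑ τ : Equiv.Perm (Fin (n+1)),
        (∑ σ ∈ Finset.univ.filter (fun σ => G σ = τ), lam σ) *
          (if isTop τ T i then (1:ℝ) else 0) := by
        refine Finset.sum_congr rfl fun τ _ => ?_
        rw [mul_ite, mul_one, mul_zero]
    _ = ∑ σ : Equiv.Perm (Fin (n+1)), lam σ * (if isTop (G σ) T i then (1:ℝ) else 0) :=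
        sum_fiber_mul G lam _
    _ = ∑ σ : Equiv.Perm (Fin (n+1)), (if isTop (G σ) T i then lam σ else 0) := by
        refine Finset.sum_congr rfl fun σ _ => ?_
        rw [mul_ite, mul_one, mul_zero]

lemma expRev_pushforward (r : Fin (n+1) → ℝ)
    (G : Equiv.Perm (Fin (n+1)) → Equiv.Perm (Fin (n+1)))
    (lam : Equiv.Perm (Fin (n+1)) → ℝ) {S : Finset (Fin (n+1))} (h : S.Nonempty) :
    expRev r (fun τ => ∑ σ ∈ Finset.univ.filter (fun σ => G σ = τ), lam σ) S
      = ∑ σ : Equiv.Perm (Fin (n+1)), lam σ * r (topE (G σ) S) := by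
  rw [expRev_eq_sum_perm r _ h]
  exact sum_fiber_mul G lam (fun τ => r (topE τ S))

/-! ### The main theorem -/

/-- Theorem 2 of the paper: with revenue-ordered past assortments and exact data, the robust
optimum equals the best revenue among the past assortments. (The `m`-th past assortment,
`m : Fin n`, is the paper's assortment `S_{m+1} = {0, m+1, m+2, …, n}`.) -/
theorem statement3 (n : ℕ) (hn : 1 ≤ n)
    (r : Fin (n + 1) → ℝ) (hr0 : r 0 = 0) (hr : StrictMono r)
    (Sm : Fin n → Finset (Fin (n + 1)))
    (hSm : ∀ m : Fin n, Sm m =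
      Finset.univ.filter (fun i : Fin (n + 1) => i = 0 ∨ (m : ℕ) < (i : ℕ)))
    (v : Fin n → Fin (n + 1) → ℝ)
    (hU : (Uset Sm v 0).Nonempty) :
    sSup {x : ℝ | ∃ S : Finset (Fin (n + 1)), 0 ∈ S ∧ x = wcRev Sm v 0 r S} =
      sSup {x : ℝ | ∃ m : Fin n, x = ∑ i ∈ Sm m, r i * v m i} := by
  classical
  obtain ⟨lam0, hlam0⟩ := hU
  have hSmSa : ∀ m : Fin n, Sm m = Sa n (m : ℕ) := fun m => hSm m
  have h0Sm : ∀ m : Fin n, (0 : Fin (n+1)) ∈ Sm m := fun m => by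
    rw [hSmSa m]; exact zero_mem_Sa _
  -- any model in the uncertainty set reproduces the data exactly
  have hdata : ∀ lam ∈ Uset Sm v 0, ∀ m : Fin n, ∀ i ∈ Sm m,
      choiceProb lam (Sm m) i = v m i := by
    intro lam hlam m i hi
    have h := hlam.2 m i hi
    rw [abs_nonpos_iff, sub_eq_zero] at h
    exact h
  have hexpm : ∀ lam ∈ Uset Sm v 0, ∀ m : Fin n,
      expRev r lam (Sm m) = ∑ i ∈ Sm m, r i * v m i := fun lam hlam m =>
    Finset.sum_congr rfl fun i hi => by rw [hdata lam hlam m i hi]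
  have hnonneg : ∀ lam ∈ Uset Sm v 0, ∀ S : Finset (Fin (n+1)), 0 ≤ expRev r lam S :=
    fun lam hlam S => expRev_nonneg hr0 hr hlam.1.1 S
  have hRm0 : ∀ m : Fin n, 0 ≤ ∑ i ∈ Sm m, r i * v m i := fun m => by
    rw [← hexpm lam0 hlam0 m]; exact hnonneg lam0 hlam0 _
  -- worst case revenue of the past assortments
  have hwc : ∀ m : Fin n, wcRev Sm v 0 r (Sm m) = ∑ i ∈ Sm m, r i * v m i := by
    intro m
    rw [wcRev]
    have hset : {x | ∃ lam ∈ Uset Sm v 0, x = expRev r lam (Sm m)}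
        = {∑ i ∈ Sm m, r i * v m i} := by
      ext x
      simp only [Set.mem_setOf_eq, Set.mem_singleton_iff]
      constructor
      · rintro ⟨lam, hlam, rfl⟩; exact hexpm lam hlam m
      · rintro rfl; exact ⟨lam0, hlam0, (hexpm lam0 hlam0 m).symm⟩
    rw [hset, csInf_singleton]
  -- the key bound: every assortment is dominated by some past assortment
  have hbound : ∀ S : Finset (Fin (n+1)), 0 ∈ S →
      ∃ m : Fin n, wcRev Sm v 0 r S ≤ ∑ i ∈ Sm m, r i * v m i := by
    intro S h0
    have hbdd : BddBelow {x | ∃ lam ∈ Uset Sm v 0, x = expRev r lam S} := by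
      refine ⟨0, ?_⟩
      rintro x ⟨lam, hlam, rfl⟩
      exact hnonneg lam hlam S
    by_cases hSne : (S.filter (fun j => j ≠ 0)).Nonempty
    · set s := (S.filter (fun j => j ≠ 0)).min' hSne with hsdef
      have hsmem := Finset.min'_mem _ hSne
      rw [Finset.mem_filter] at hsmem
      obtain ⟨hsS, hs0⟩ := hsmem
      have hsmin : ∀ j ∈ S, j ≠ 0 → s ≤ j := fun j hj hj0 =>
        Finset.min'_le _ j (Finset.mem_filter.mpr ⟨hj, hj0⟩)
      have hs1 : 1 ≤ (s : ℕ) :=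
        Nat.one_le_iff_ne_zero.mpr (fun h => hs0 (Fin.val_injective h))
      have hsn : (s : ℕ) ≤ n := Fin.is_le s
      set m : Fin n := ⟨(s : ℕ) - 1, by omega⟩ with hmdef
      have hSam : Sm m = Sa n ((s : ℕ) - 1) := hSmSa m
      refine ⟨m, ?_⟩
      -- the canonicalized model
      set lam' : Equiv.Perm (Fin (n+1)) → ℝ :=
        fun τ => ∑ σ ∈ Finset.univ.filter (fun σ => cperm σ s = τ), lam0 σ with hlam'def
      have hmem : lam' ∈ Uset Sm v 0 := by
        refine ⟨⟨fun τ => Finset.sum_nonneg fun σ _ => hlam0.1.1 σ, ?_⟩, ?_⟩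
        · rw [hlam'def]
          exact (sum_fiber (fun σ => cperm σ s) lam0).trans hlam0.1.2
        · intro m' i hi
          have hcp : choiceProb lam' (Sm m') i = choiceProb lam0 (Sm m') i := by
            rw [hlam'def, choiceProb_pushforward (fun σ => cperm σ s) lam0]
            unfold choiceProb
            refine Finset.sum_congr rfl fun σ _ => ?_
            refine if_congr ?_ rfl rfl
            rw [hSmSa m']
            exact (isTop_congr ⟨0, zero_mem_Sa _⟩
              (fun i' hi' => isTop_cperm_Sa hs0 hi') i).symm
          rw [hcp]
          exact hlam0.2 m' i hi
      have hle : expRev r lam' S ≤ expRev r lam0 (Sm m) := by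
        rw [hSam, hlam'def,
          expRev_pushforward r (fun σ => cperm σ s) lam0 ⟨0, h0⟩,
          expRev_eq_sum_perm r lam0 ⟨0, zero_mem_Sa ((s : ℕ) - 1)⟩]
        refine Finset.sum_le_sum fun σ _ => ?_
        exact mul_le_mul_of_nonneg_left
          (hr.monotone (topE_cperm_le hs0 h0 hsS hsmin)) (hlam0.1.1 σ)
      calc wcRev Sm v 0 r S ≤ expRev r lam' S := csInf_le hbdd ⟨lam', hmem, rfl⟩
        _ ≤ expRev r lam0 (Sm m) := hle
        _ = ∑ i ∈ Sm m, r i * v m i := hexpm lam0 hlam0 m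
    · -- S = {0}
      have hSeq : S = {0} := by
        apply Finset.eq_singleton_iff_unique_mem.mpr
        refine ⟨h0, fun x hx => ?_⟩
        by_contra hx0
        exact hSne ⟨x, Finset.mem_filter.mpr ⟨hx, hx0⟩⟩
      refine ⟨⟨0, hn⟩, ?_⟩
      have hz : expRev r lam0 S = 0 := by
        rw [hSeq, expRev]
        simp [hr0]
      calc wcRev Sm v 0 r S ≤ expRev r lam0 S := csInf_le hbdd ⟨lam0, hlam0, rfl⟩
        _ = 0 := hz
        _ ≤ _ := hRm0 _
  -- boundedness of the right-hand set
  have hBeq : {x : ℝ | ∃ m : Fin n, x = ∑ i ∈ Sm m, r i * v m i}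
      = Set.range (fun m : Fin n => ∑ i ∈ Sm m, r i * v m i) := by
    ext x; simp [Set.mem_range, eq_comm]
  have hBbdd : BddAbove {x : ℝ | ∃ m : Fin n, x = ∑ i ∈ Sm m, r i * v m i} := by
    rw [hBeq]; exact (Set.finite_range _).bddAbove
  have hAub : ∀ x ∈ {x : ℝ | ∃ S : Finset (Fin (n + 1)), 0 ∈ S ∧ x = wcRev Sm v 0 r S},
      x ≤ sSup {x : ℝ | ∃ m : Fin n, x = ∑ i ∈ Sm m, r i * v m i} := by
    rintro x ⟨S, h0, rfl⟩
    obtain ⟨m, hm⟩ := hbound S h0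
    exact le_trans hm (le_csSup hBbdd ⟨m, rfl⟩)
  apply le_antisymm
  · refine csSup_le ⟨wcRev Sm v 0 r (Sm ⟨0, hn⟩), Sm ⟨0, hn⟩, h0Sm _, rfl⟩ hAub
  · refine csSup_le ⟨∑ i ∈ Sm ⟨0, hn⟩, r i * v ⟨0, hn⟩ i, ⟨0, hn⟩, rfl⟩ ?_
    rintro x ⟨m, rfl⟩
    refine le_csSup ⟨_, hAub⟩ ⟨Sm m, h0Sm m, (hwc m).symm⟩

end RobustAssortment
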